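/- Let 𝓡 = [R̲, R̄] be a closed interval of a rich single-crossing domain and let F = (t_F, q_F) be a strategy-proof and individually rational mechanism on 𝓡 with F(R̲) = (0,0). Suppose R̲ ≺ R¹ ≺ … ≺ R^m ≺ R̄ are finitely many preferences, and R^{1*}, …, R^{(m+1)*} are chosen so that R̲ ≼ R^{1*} ≼ R¹ ≼ R^{2*} ≼ … ≼ R^{m} ≼ R^{(m+1)*} ≼ R̄ and (0,0) I^{1*} F(R¹), F(R¹) I^{2*} F(R²), …, F(R^{m-1}) I^{m*} F(R^m), F(R^m) I^{(m+1)*} F(R̄), where I^{k*} denotes indifference under R^{k*}. Define the finite-range mechanism G by G(R) = (0,0) on [R̲, R^{1*}), G(R) = F(R^k) on [R^{k*}, R^{(k+1)*}) for k = 1, …, m, and G(R) = F(R̄) on [R^{(m+1)*}, R̄]. Then G is strategy-proof and individually rational. -/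

import Mathlib

open Set MeasureTheory Filter Topology
open scoped ENNReal

noncomputable section

abbrev Bundle : Type := ℝ × ℝ

/-- The set of allocations Z = [0,∞) × [0,1]. -/
def Z : Set Bundle := {p | 0 ≤ p.1 ∧ p.2 ∈ Set.Icc (0:ℝ) 1}

/-- A CM (continuous, monotone) preference on Z. -/
structure CMPref where
  R : Bundle → Bundle → Prop
  total : ∀ x ∈ Z, ∀ y ∈ Z, R x y ∨ R y x
  trans : ∀ x y z : Bundle, R x y → R y z → R x z
  moneyMono : ∀ t' t'' q : ℝ, (t', q) ∈ Z → (t'', q) ∈ Z → t' < t'' →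
    R (t', q) (t'', q) ∧ ¬ R (t'', q) (t', q)
  qMono : ∀ t q' q'' : ℝ, (t, q') ∈ Z → (t, q'') ∈ Z → q' < q'' →
    R (t, q'') (t, q') ∧ ¬ R (t, q') (t, q'')
  contUC : ∀ z ∈ Z, IsClosed {x | x ∈ Z ∧ R x z}
  contLC : ∀ z ∈ Z, IsClosed {x | x ∈ Z ∧ R z x}

/-- Indifference. -/
def CMPref.I (p : CMPref) (x y : Bundle) : Prop := p.R x y ∧ p.R y x

/-- Indifference class of x. -/
def IC (p : CMPref) (x : Bundle) : Set Bundle := {y | y ∈ Z ∧ p.I y x}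

/-- Single-crossing property of two preferences. -/
def SingleCrossing (p p' : CMPref) : Prop :=
  ∀ x y z : Bundle, z ∈ IC p x ∩ IC p' y → IC p x ∩ IC p' y = {z}

/-- x ≤ y on bundles: equal, or strictly smaller in both coordinates. -/
def bleq (x y : Bundle) : Prop := x = y ∨ (x.1 < y.1 ∧ x.2 < y.2)

/-- □(z) = bundles (in Z) below z. -/
def square (z : Bundle) : Set Bundle := {x | x ∈ Z ∧ bleq x z}

/-- Upper contour set within Z. -/
def UC (p : CMPref) (z : Bundle) : Set Bundle := {x | x ∈ Z ∧ p.R x z}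

/-- p'' cuts p' from above at z. -/
def CutsAt (p' p'' : CMPref) (z : Bundle) : Prop :=
  square z ∩ UC p'' z ⊆ square z ∩ UC p' z

/-- p' ≺ p'' : p'' cuts p' from above at every bundle (and they are distinct). -/
def Prec (p' p'' : CMPref) : Prop := p' ≠ p'' ∧ ∀ z ∈ Z, CutsAt p' p'' z

/-- p ≼ p'. -/
def PrecEq (p p' : CMPref) : Prop := Prec p p' ∨ p = p'

/-- Rich single-crossing domain. -/
def RichSC (D : Set CMPref) : Prop :=
  (∀ p ∈ D, ∀ p' ∈ D, p ≠ p' → SingleCrossing p p') ∧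
  (∀ x ∈ Z, ∀ y ∈ Z, x.1 < y.1 → x.2 < y.2 → ∃ p ∈ D, p.I x y)

/-- Closed interval [a,b] within the domain D. -/
def OrdInterval (D : Set CMPref) (a b : CMPref) : Set CMPref :=
  {p | p ∈ D ∧ PrecEq a p ∧ PrecEq p b}

/-- Strategy-proofness on a set of preferences. -/
def StrategyProofOn (S : Set CMPref) (F : CMPref → Bundle) : Prop :=
  ∀ p ∈ S, ∀ p' ∈ S, p.R (F p) (F p')

/-- Individual rationality on a set of preferences. -/
def IROn (S : Set CMPref) (F : CMPref → Bundle) : Prop :=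
  ∀ p ∈ S, p.R (F p) ((0:ℝ), (0:ℝ))


namespace SCAux

lemma memZ {t s : ℝ} (h0 : 0 ≤ t) (h1 : 0 ≤ s) (h2 : s ≤ 1) : ((t,s) : Bundle) ∈ Z :=
  ⟨h0, h1, h2⟩

lemma Z1 {x : Bundle} (hx : x ∈ Z) : 0 ≤ x.1 := hx.1
lemma Z2 {x : Bundle} (hx : x ∈ Z) : 0 ≤ x.2 := hx.2.1
lemma Z3 {x : Bundle} (hx : x ∈ Z) : x.2 ≤ 1 := hx.2.2

lemma zeroZ : ((0:ℝ),(0:ℝ)) ∈ Z := ⟨le_refl _, le_refl _, zero_le_one⟩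

lemma rrefl (r : CMPref) {x : Bundle} (hx : x ∈ Z) : r.R x x :=
  (r.total x hx x hx).elim id id

lemma rtot (r : CMPref) {x y : Bundle} (hx : x ∈ Z) (hy : y ∈ Z) (h : ¬ r.R x y) : r.R y x :=
  (r.total x hx y hy).elim (fun h' => absurd h' h) id

lemma money_le (r : CMPref) {t t' q : ℝ} (h1 : (t,q) ∈ Z) (h2 : (t',q) ∈ Z) (h : t ≤ t') :
    r.R (t,q) (t',q) := by
  rcases eq_or_lt_of_le h with he | hl
  · subst he; exact rrefl r h1
  · exact (r.moneyMono t t' q h1 h2 hl).1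

lemma q_le (r : CMPref) {t q q' : ℝ} (h1 : (t,q) ∈ Z) (h2 : (t,q') ∈ Z) (h : q ≤ q') :
    r.R (t,q') (t,q) := by
  rcases eq_or_lt_of_le h with he | hl
  · subst he; exact rrefl r h1
  · exact (r.qMono t q q' h1 h2 hl).1

/-- vertical intermediate value theorem -/
lemma ivt_vert (r : CMPref) {z : Bundle} (hz : z ∈ Z) {t s1 s2 : ℝ}
    (h12 : s1 ≤ s2) (hb : (t,s1) ∈ Z) (ht : (t,s2) ∈ Z)
    (hlow : r.R z (t,s1)) (hhigh : r.R (t,s2) z) :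
    ∃ s, s ∈ Icc s1 s2 ∧ r.I ((t,s) : Bundle) z := by
  have hZ : ∀ s ∈ Icc s1 s2, ((t,s) : Bundle) ∈ Z := by
    intro s hs
    exact memZ (Z1 hb) (le_trans (Z2 hb) hs.1) (le_trans hs.2 (Z3 ht))
  have hcont : Continuous (fun s : ℝ => ((t,s) : Bundle)) := by continuity
  set A : Set ℝ := (fun s : ℝ => ((t,s):Bundle)) ⁻¹' {x | x ∈ Z ∧ r.R x z} with hAdef
  set B : Set ℝ := (fun s : ℝ => ((t,s):Bundle)) ⁻¹' {x | x ∈ Z ∧ r.R z x} with hBdef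
  have hA : IsClosed A := (r.contUC z hz).preimage hcont
  have hB : IsClosed B := (r.contLC z hz).preimage hcont
  have hcover : Icc s1 s2 ⊆ A ∪ B := by
    intro s hs
    rcases r.total _ (hZ s hs) z hz with h | h
    · exact Or.inl ⟨hZ s hs, h⟩
    · exact Or.inr ⟨hZ s hs, h⟩
  have hne1 : (Icc s1 s2 ∩ A).Nonempty := ⟨s2, ⟨h12, le_refl _⟩, ⟨ht, hhigh⟩⟩
  have hne2 : (Icc s1 s2 ∩ B).Nonempty := ⟨s1, ⟨le_refl _, h12⟩, ⟨hb, hlow⟩⟩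
  obtain ⟨s, hs, h1, h2⟩ :=
    (isPreconnected_closed_iff.mp isPreconnected_Icc) A B hA hB hcover hne1 hne2
  exact ⟨s, hs, h1.2, h2.2⟩

lemma indiff_unique (r : CMPref) {z : Bundle} {t s s' : ℝ}
    (h1 : (t,s) ∈ Z) (h2 : (t,s') ∈ Z)
    (hi : r.I ((t,s):Bundle) z) (hi' : r.I ((t,s'):Bundle) z) : s = s' := by
  rcases lt_trichotomy s s' with h | h | h
  · exact absurd (r.trans _ z _ hi.1 hi'.2) (r.qMono t s s' h1 h2 h).2
  · exact h
  · exact absurd (r.trans _ z _ hi'.1 hi.2) (r.qMono t s' s h2 h1 h).2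

lemma indiff_money_lt (r : CMPref) {z a b : Bundle} (ha : a ∈ Z) (hb : b ∈ Z)
    (hia : r.I a z) (hib : r.I b z) (h : a.1 < b.1) : a.2 < b.2 := by
  by_contra hc
  push_neg at hc
  have h1 : ((a.1, b.2) : Bundle) ∈ Z := memZ (Z1 ha) (Z2 hb) (Z3 hb)
  have haZ : ((a.1, a.2) : Bundle) ∈ Z := by rw [Prod.mk.eta]; exact ha
  have h2 : r.R a ((a.1,b.2):Bundle) := by
    have := q_le r h1 haZ hc
    rw [Prod.mk.eta] at this
    exact this
  have h3 : ¬ r.R b ((a.1, b.2) : Bundle) := by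
    have hbZ : ((b.1, b.2) : Bundle) ∈ Z := by rw [Prod.mk.eta]; exact hb
    have := (r.moneyMono a.1 b.1 b.2 h1 hbZ h).2
    rw [Prod.mk.eta] at this
    exact this
  have hba : r.R b a := r.trans _ z _ hib.1 hia.2
  exact h3 (r.trans _ _ _ hba h2)

lemma indiff_snd_lt (r : CMPref) {z u : Bundle} (hu : u ∈ Z) (hz : z ∈ Z)
    (hI : r.I u z) (h : u.1 < z.1) : u.2 < z.2 :=
  indiff_money_lt r hu hz hI ⟨rrefl r hz, rrefl r hz⟩ h

lemma two_point {p q : CMPref} (hsc : SingleCrossing p q) {z u : Bundle}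
    (hu : u ∈ Z) (hz : z ∈ Z) (hne : u ≠ z) (hpI : p.I u z) (hqI : q.I u z) : False := by
  have hzz : z ∈ IC p z ∩ IC q z :=
    ⟨⟨hz, rrefl p hz, rrefl p hz⟩, ⟨hz, rrefl q hz, rrefl q hz⟩⟩
  have := hsc z z z hzz
  have hu' : u ∈ IC p z ∩ IC q z := ⟨⟨hu, hpI⟩, ⟨hu, hqI⟩⟩
  rw [this] at hu'
  exact hne hu'

/-- indifference curve through `z`, starting from a point `u` left-below `z`,
as a function on money levels `[u.1, T]`. -/
lemma curve (p : CMPref) {z u : Bundle} (hz : z ∈ Z) (hu : u ∈ Z) (hi : p.I u z)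
    (h1 : u.1 < z.1) {T : ℝ} (hT : T < z.1) (hT0 : u.1 ≤ T) :
    ∃ f : ℝ → ℝ,
      (∀ t, t ∈ Icc u.1 T → ((t, f t) : Bundle) ∈ Z ∧ p.I ((t, f t):Bundle) z ∧
        u.2 ≤ f t ∧ f t < z.2) ∧
      (∀ t t', t ∈ Icc u.1 T → t' ∈ Icc u.1 T → t < t' → f t < f t') ∧
      (∀ t s, t ∈ Icc u.1 T → ((t,s):Bundle) ∈ Z → p.I ((t,s):Bundle) z → s = f t) := by
  have hu2 : u.2 < z.2 := indiff_snd_lt p hu hz hi h1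
  have huZ : ((u.1, u.2) : Bundle) ∈ Z := by rw [Prod.mk.eta]; exact hu
  have hzZ : ((z.1, z.2) : Bundle) ∈ Z := by rw [Prod.mk.eta]; exact hz
  have hex : ∀ t, t ∈ Icc u.1 T → ∃ s, s ∈ Icc u.2 z.2 ∧ p.I ((t,s):Bundle) z := by
    intro t ht
    have hbZ : ((t, u.2) : Bundle) ∈ Z := memZ (le_trans (Z1 hu) ht.1) (Z2 hu) (Z3 hu)
    have htZ : ((t, z.2) : Bundle) ∈ Z := memZ (le_trans (Z1 hu) ht.1) (Z2 hz) (Z3 hz)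
    have hlow : p.R z ((t, u.2) : Bundle) := by
      have h' : p.R ((u.1,u.2):Bundle) ((t,u.2):Bundle) := money_le p huZ hbZ ht.1
      rw [Prod.mk.eta] at h'
      exact p.trans _ _ _ hi.2 h'
    have hhigh : p.R ((t, z.2):Bundle) z := by
      have h' : p.R ((t,z.2):Bundle) ((z.1,z.2):Bundle) := money_le p htZ hzZ (le_trans ht.2 (le_of_lt hT))
      rw [Prod.mk.eta] at h'
      exact h'
    exact ivt_vert p hz hu2.le hbZ htZ hlow hhigh
  choose! f hf1 hf2 using hex
  refine ⟨f, ?_, ?_, ?_⟩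
  · intro t ht
    have hZt : ((t, f t) : Bundle) ∈ Z :=
      memZ (le_trans (Z1 hu) ht.1) (le_trans (Z2 hu) (hf1 t ht).1)
        (le_trans (hf1 t ht).2 (Z3 hz))
    refine ⟨hZt, hf2 t ht, (hf1 t ht).1, ?_⟩
    rcases lt_or_eq_of_le (hf1 t ht).2 with h | h
    · exact h
    · exfalso
      have hmem : ((t, z.2) : Bundle) ∈ Z := by rw [← h]; exact hZt
      have : ¬ p.R z ((t, z.2) : Bundle) := by
        have := (p.moneyMono t z.1 z.2 hmem hzZ (lt_of_le_of_lt ht.2 hT)).2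
        rw [Prod.mk.eta] at this
        exact this
      rw [← h] at this
      exact this (hf2 t ht).2
  · intro t t' ht ht' hlt
    have hA := hf2 t ht
    have hB := hf2 t' ht'
    have hAZ : ((t, f t) : Bundle) ∈ Z :=
      memZ (le_trans (Z1 hu) ht.1) (le_trans (Z2 hu) (hf1 t ht).1)
        (le_trans (hf1 t ht).2 (Z3 hz))
    have hBZ : ((t', f t') : Bundle) ∈ Z :=
      memZ (le_trans (Z1 hu) ht'.1) (le_trans (Z2 hu) (hf1 t' ht').1)
        (le_trans (hf1 t' ht').2 (Z3 hz))
    exact indiff_money_lt p hAZ hBZ hA hB hlt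
  · intro t s ht hsZ hsI
    have hAZ : ((t, f t) : Bundle) ∈ Z :=
      memZ (le_trans (Z1 hu) ht.1) (le_trans (Z2 hu) (hf1 t ht).1)
        (le_trans (hf1 t ht).2 (Z3 hz))
    exact indiff_unique p hsZ hAZ hsI (hf2 t ht)

lemma flip_core (p : CMPref) {z u v : Bundle} (hz : z ∈ Z) (hu : u ∈ Z) (hv : v ∈ Z)
    (hiu : p.I u z) (hiv : p.I v z) (h1 : u.1 ≤ v.1) (h2 : v.1 < z.1)
    (W Wc : Bundle → Prop)
    (hWcl : IsClosed {x | x ∈ Z ∧ W x}) (hWccl : IsClosed {x | x ∈ Z ∧ Wc x})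
    (htot : ∀ x, x ∈ Z → ¬ W x → Wc x)
    (hWu : W u) (hWcv : Wc v) :
    ∃ c : Bundle, c ∈ Z ∧ p.I c z ∧ W c ∧ Wc c ∧ c.1 < z.1 := by
  have hu1 : u.1 < z.1 := lt_of_le_of_lt h1 h2
  obtain ⟨f, hf, hmono, huniq⟩ := curve p hz hu hiu hu1 h2 h1
  have huI : u.1 ∈ Icc u.1 v.1 := ⟨le_refl _, h1⟩
  have hvI : v.1 ∈ Icc u.1 v.1 := ⟨h1, le_refl _⟩
  have huZ : ((u.1, u.2) : Bundle) ∈ Z := by rw [Prod.mk.eta]; exact hu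
  have hvZ : ((v.1, v.2) : Bundle) ∈ Z := by rw [Prod.mk.eta]; exact hv
  have hiu' : p.I ((u.1,u.2):Bundle) z := by rw [Prod.mk.eta]; exact hiu
  have hiv' : p.I ((v.1,v.2):Bundle) z := by rw [Prod.mk.eta]; exact hiv
  have hfu : f u.1 = u.2 := (huniq u.1 u.2 huI huZ hiu').symm
  have hfv : f v.1 = v.2 := (huniq v.1 v.2 hvI hvZ hiv').symm
  have hmle : ∀ t t', t ∈ Icc u.1 v.1 → t' ∈ Icc u.1 v.1 → t ≤ t' → f t ≤ f t' := by
    intro t t' ht ht' hle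
    rcases eq_or_lt_of_le hle with he | hl
    · rw [he]
    · exact (hmono t t' ht ht' hl).le
  set S : Set ℝ := {t | t ∈ Icc u.1 v.1 ∧ W ((t, f t) : Bundle)} with hSdef
  have hWu' : W ((u.1, f u.1) : Bundle) := by rw [hfu, Prod.mk.eta]; exact hWu
  have hSne : S.Nonempty := ⟨u.1, huI, hWu'⟩
  have hSbdd : BddAbove S := ⟨v.1, fun t ht => ht.1.2⟩
  set t₀ : ℝ := sSup S with ht₀def
  have ht₀mem : t₀ ∈ Icc u.1 v.1 :=
    ⟨le_csSup hSbdd ⟨huI, hWu'⟩, csSup_le hSne (fun t ht => ht.1.2)⟩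
  have hICcl : IsClosed ({x : Bundle | x ∈ Z ∧ p.R x z} ∩ {x | x ∈ Z ∧ p.R z x}) :=
    (p.contUC z hz).inter (p.contLC z hz)
  -- left-sided limit: W holds at (t₀, f t₀)
  obtain ⟨un, humon, hulim, huS⟩ := exists_seq_tendsto_sSup hSne hSbdd
  have hunI : ∀ n, un n ∈ Icc u.1 v.1 := fun n => (huS n).1
  have hgmono : Monotone (fun n => f (un n)) := by
    intro a b hab
    exact hmle _ _ (hunI a) (hunI b) (humon hab)
  have hgbdd : BddAbove (Set.range (fun n => f (un n))) := by
    refine ⟨z.2, ?_⟩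
    rintro x ⟨n, rfl⟩
    exact (hf (un n) (hunI n)).2.2.2.le
  have hglim : Tendsto (fun n => f (un n)) atTop (𝓝 (⨆ n, f (un n))) :=
    tendsto_atTop_ciSup hgmono hgbdd
  set L : ℝ := ⨆ n, f (un n) with hLdef
  have hpair : Tendsto (fun n => ((un n, f (un n)) : Bundle)) atTop (𝓝 ((t₀, L) : Bundle)) :=
    hulim.prodMk_nhds hglim
  have hmemL : ((t₀, L) : Bundle) ∈
      ({x : Bundle | x ∈ Z ∧ p.R x z} ∩ {x | x ∈ Z ∧ p.R z x}) ∩ {x | x ∈ Z ∧ W x} := by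
    refine (hICcl.inter hWcl).mem_of_tendsto hpair (Filter.Eventually.of_forall ?_)
    intro n
    have h' := hf (un n) (hunI n)
    exact ⟨⟨⟨h'.1, h'.2.1.1⟩, ⟨h'.1, h'.2.1.2⟩⟩, h'.1, (huS n).2⟩
  have hLI : p.I ((t₀, L):Bundle) z := ⟨hmemL.1.1.2, hmemL.1.2.2⟩
  have hLf : L = f t₀ := huniq t₀ L ht₀mem hmemL.1.1.1 hLI
  have hWt₀ : W ((t₀, f t₀) : Bundle) := by rw [← hLf]; exact hmemL.2.2
  have hcZ : ((t₀, f t₀) : Bundle) ∈ Z := (hf t₀ ht₀mem).1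
  have hcI : p.I ((t₀, f t₀):Bundle) z := (hf t₀ ht₀mem).2.1
  have hWct₀ : Wc ((t₀, f t₀) : Bundle) := by
    rcases eq_or_lt_of_le ht₀mem.2 with he | hl
    · rw [he, hfv, Prod.mk.eta]; exact hWcv
    · -- right-sided limit
      set tn : ℕ → ℝ := fun n => t₀ + (v.1 - t₀)/((n:ℝ)+1) with htndef
      have hpos : ∀ n : ℕ, (0:ℝ) < (v.1 - t₀)/((n:ℝ)+1) := by
        intro n
        apply div_pos (by linarith) (by positivity)
      have htnI : ∀ n, tn n ∈ Icc u.1 v.1 := by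
        intro n
        constructor
        · have := (hpos n).le; simp only [htndef]; linarith [ht₀mem.1]
        · simp only [htndef]
          have h1' : (v.1 - t₀)/((n:ℝ)+1) ≤ v.1 - t₀ := by
            apply div_le_self (by linarith)
            linarith [Nat.cast_nonneg (α := ℝ) n]
          linarith
      have htngt : ∀ n, t₀ < tn n := fun n => by
        simp only [htndef]; linarith [hpos n]
      have htnWc : ∀ n, Wc ((tn n, f (tn n)) : Bundle) := by
        intro n
        apply htot _ (hf (tn n) (htnI n)).1
        intro hW
        have : tn n ∈ S := ⟨htnI n, hW⟩
        exact absurd (le_csSup hSbdd this) (not_le.mpr (htngt n))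
      have htnanti : Antitone tn := by
        intro a b hab
        simp only [htndef]
        have hnum : (0:ℝ) ≤ v.1 - t₀ := by linarith
        have : (v.1 - t₀)/((b:ℝ)+1) ≤ (v.1 - t₀)/((a:ℝ)+1) := by
          apply div_le_div_of_nonneg_left hnum (by positivity)
            (by have := (Nat.cast_le (α := ℝ)).mpr hab; linarith)
        linarith
      have hganti : Antitone (fun n => f (tn n)) := by
        intro a b hab
        exact hmle _ _ (htnI b) (htnI a) (htnanti hab)
      have hgbdd' : BddBelow (Set.range (fun n => f (tn n))) := by
        refine ⟨u.2, ?_⟩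
        rintro x ⟨n, rfl⟩
        exact (hf (tn n) (htnI n)).2.2.1
      have hglim' : Tendsto (fun n => f (tn n)) atTop (𝓝 (⨅ n, f (tn n))) :=
        tendsto_atTop_ciInf hganti hgbdd'
      have htnlim : Tendsto tn atTop (𝓝 t₀) := by
        have h0 : Tendsto (fun n : ℕ => (v.1 - t₀) * (1/((n:ℝ)+1))) atTop (𝓝 ((v.1 - t₀) * 0)) :=
          tendsto_const_nhds.mul tendsto_one_div_add_atTop_nhds_zero_nat
        have h0' : Tendsto (fun n : ℕ => (v.1 - t₀)/((n:ℝ)+1)) atTop (𝓝 0) := by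
          rw [mul_zero] at h0
          convert h0 using 2 with n
          ring
        have h2' : Tendsto (fun n : ℕ => t₀ + (v.1 - t₀)/((n:ℝ)+1)) atTop (𝓝 (t₀ + 0)) :=
          h0'.const_add t₀
        rw [add_zero] at h2'
        exact h2' 
      set L' : ℝ := ⨅ n, f (tn n) with hL'def
      have hpair' : Tendsto (fun n => ((tn n, f (tn n)) : Bundle)) atTop (𝓝 ((t₀, L') : Bundle)) :=
        htnlim.prodMk_nhds hglim'
      have hmemL' : ((t₀, L') : Bundle) ∈
          ({x : Bundle | x ∈ Z ∧ p.R x z} ∩ {x | x ∈ Z ∧ p.R z x}) ∩ {x | x ∈ Z ∧ Wc x} := by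
        refine (hICcl.inter hWccl).mem_of_tendsto hpair' (Filter.Eventually.of_forall ?_)
        intro n
        have h' := hf (tn n) (htnI n)
        exact ⟨⟨⟨h'.1, h'.2.1.1⟩, ⟨h'.1, h'.2.1.2⟩⟩, h'.1, htnWc n⟩
      have hL'I : p.I ((t₀, L'):Bundle) z := ⟨hmemL'.1.1.2, hmemL'.1.2.2⟩
      have hL'f : L' = f t₀ := huniq t₀ L' ht₀mem hmemL'.1.1.1 hL'I
      rw [← hL'f]
      exact hmemL'.2.2
  exact ⟨((t₀, f t₀) : Bundle), hcZ, hcI, hWt₀, hWct₀, lt_of_le_of_lt ht₀mem.2 h2⟩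

lemma flip (p q : CMPref) (hsc : SingleCrossing p q) {z u v : Bundle}
    (hz : z ∈ Z) (hu : u ∈ Z) (hv : v ∈ Z)
    (hiu : p.I u z) (hiv : p.I v z) (h1 : u.1 ≤ v.1) (h2 : v.1 < z.1)
    (hor : (q.R u z ∧ q.R z v) ∨ (q.R z u ∧ q.R v z)) : False := by
  rcases hor with ⟨hA, hB⟩ | ⟨hA, hB⟩
  · obtain ⟨c, hcZ, hcI, hW, hWc, hclt⟩ :=
      flip_core p hz hu hv hiu hiv h1 h2 (fun x => q.R x z) (fun x => q.R z x)
        (q.contUC z hz) (q.contLC z hz) (fun x hx hnx => rtot q hx hz hnx) hA hB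
    exact two_point hsc hcZ hz (fun h => absurd (congrArg Prod.fst h) (ne_of_lt hclt))
      hcI ⟨hW, hWc⟩
  · obtain ⟨c, hcZ, hcI, hW, hWc, hclt⟩ :=
      flip_core p hz hu hv hiu hiv h1 h2 (fun x => q.R z x) (fun x => q.R x z)
        (q.contLC z hz) (q.contUC z hz) (fun x hx hnx => rtot q hz hx hnx) hA hB
    exact two_point hsc hcZ hz (fun h => absurd (congrArg Prod.fst h) (ne_of_lt hclt))
      hcI ⟨hWc, hW⟩

lemma sign_consistent (p q : CMPref) (hsc : SingleCrossing p q) {z a a' : Bundle}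
    (hz : z ∈ Z) (ha : a ∈ Z) (ha' : a' ∈ Z) (hia : p.I a z) (hia' : p.I a' z)
    (h1 : a.1 < z.1) (h1' : a'.1 < z.1) (hq : ¬ q.R z a) (hq' : ¬ q.R a' z) : False := by
  rcases le_total a.1 a'.1 with h | h
  · exact flip p q hsc hz ha ha' hia hia' h h1'
      (Or.inl ⟨rtot q hz ha hq, rtot q ha' hz hq'⟩)
  · exact flip p q hsc hz ha' ha hia' hia h h1
      (Or.inr ⟨rtot q ha' hz hq', rtot q hz ha hq⟩)

lemma crossAux1 (p q : CMPref) (hsc : SingleCrossing p q) {z a b : Bundle}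
    (hz : z ∈ Z) (ha : a ∈ Z) (hb : b ∈ Z) (hia : p.I a z) (hib : q.I b z)
    (ha1 : a.1 < z.1) (hb1 : b.1 < z.1) (hab : a.1 ≤ b.1)
    (hqa : ¬ q.R z a) (hpb : ¬ p.R z b) : False := by
  obtain ⟨f, hf, hmono, huniq⟩ := curve p hz ha hia ha1 hb1 hab
  have hbI : b.1 ∈ Icc a.1 b.1 := ⟨hab, le_refl _⟩
  obtain ⟨hw0Z, hw0I, _, _⟩ := hf b.1 hbI
  have hbZ : ((b.1, b.2) : Bundle) ∈ Z := by rw [Prod.mk.eta]; exact hb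
  have hlt : f b.1 < b.2 := by
    by_contra hc
    push_neg at hc
    have h' : p.R ((b.1, f b.1):Bundle) ((b.1, b.2):Bundle) := q_le p hbZ hw0Z hc
    rw [Prod.mk.eta] at h'
    exact hpb (p.trans z _ b hw0I.2 h')
  have hq1 : q.R b ((b.1, f b.1) : Bundle) := by
    have h' : q.R ((b.1, b.2):Bundle) ((b.1, f b.1):Bundle) := q_le q hw0Z hbZ hlt.le
    rw [Prod.mk.eta] at h'
    exact h'
  have hq2 : q.R z ((b.1, f b.1) : Bundle) := q.trans z b _ hib.2 hq1
  exact flip p q hsc hz ha hw0Z hia hw0I hab hb1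
    (Or.inl ⟨rtot q hz ha hqa, hq2⟩)

lemma crossAux2 (p q : CMPref) (hsc : SingleCrossing p q) {z a b : Bundle}
    (hz : z ∈ Z) (ha : a ∈ Z) (hb : b ∈ Z) (hia : p.I a z) (hib : q.I b z)
    (ha1 : a.1 < z.1) (hb1 : b.1 < z.1) (hab : a.1 ≤ b.1)
    (hqa : ¬ q.R a z) (hpb : ¬ p.R b z) : False := by
  obtain ⟨f, hf, hmono, huniq⟩ := curve p hz ha hia ha1 hb1 hab
  have hbI : b.1 ∈ Icc a.1 b.1 := ⟨hab, le_refl _⟩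
  obtain ⟨hw0Z, hw0I, _, _⟩ := hf b.1 hbI
  have hbZ : ((b.1, b.2) : Bundle) ∈ Z := by rw [Prod.mk.eta]; exact hb
  have hlt : b.2 < f b.1 := by
    by_contra hc
    push_neg at hc
    have h' : p.R ((b.1, b.2):Bundle) ((b.1, f b.1):Bundle) := q_le p hw0Z hbZ hc
    rw [Prod.mk.eta] at h'
    exact hpb (p.trans b _ z h' hw0I.1)
  have hq1 : q.R ((b.1, f b.1) : Bundle) b := by
    have h' : q.R ((b.1, f b.1):Bundle) ((b.1, b.2):Bundle) := q_le q hbZ hw0Z hlt.le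
    rw [Prod.mk.eta] at h'
    exact h'
  have hq2 : q.R ((b.1, f b.1) : Bundle) z := q.trans _ b z hq1 hib.1
  exact flip p q hsc hz ha hw0Z hia hw0I hab hb1
    (Or.inr ⟨rtot q ha hz hqa, hq2⟩)

lemma cross1 (p q : CMPref) (hsc : SingleCrossing p q) (hsc' : SingleCrossing q p)
    {z a b : Bundle} (hz : z ∈ Z) (ha : a ∈ Z) (hb : b ∈ Z)
    (hia : p.I a z) (hib : q.I b z) (ha1 : a.1 < z.1) (hb1 : b.1 < z.1)
    (hqa : ¬ q.R z a) (hpb : ¬ p.R z b) : False := by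
  rcases le_total a.1 b.1 with h | h
  · exact crossAux1 p q hsc hz ha hb hia hib ha1 hb1 h hqa hpb
  · exact crossAux1 q p hsc' hz hb ha hib hia hb1 ha1 h hpb hqa

lemma cross2 (p q : CMPref) (hsc : SingleCrossing p q) (hsc' : SingleCrossing q p)
    {z a b : Bundle} (hz : z ∈ Z) (ha : a ∈ Z) (hb : b ∈ Z)
    (hia : p.I a z) (hib : q.I b z) (ha1 : a.1 < z.1) (hb1 : b.1 < z.1)
    (hqa : ¬ q.R a z) (hpb : ¬ p.R b z) : False := by
  rcases le_total a.1 b.1 with h | h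
  · exact crossAux2 p q hsc hz ha hb hia hib ha1 hb1 h hqa hpb
  · exact crossAux2 q p hsc' hz hb ha hib hia hb1 ha1 h hpb hqa

lemma exists_wit (p : CMPref) {z : Bundle} (hz : z ∈ Z) (h1 : 0 < z.1) (h2 : 0 < z.2) :
    ∃ a : Bundle, a ∈ Z ∧ a.1 < z.1 ∧ a.2 < z.2 ∧ p.I a z := by
  have hzZ : ((z.1, z.2) : Bundle) ∈ Z := by rw [Prod.mk.eta]; exact hz
  have hz0 : ((z.1, (0:ℝ)) : Bundle) ∈ Z := memZ (Z1 hz) (le_refl _) zero_le_one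
  have hstep : ∃ t, 0 ≤ t ∧ t < z.1 ∧ p.R z ((t,(0:ℝ)):Bundle) := by
    by_contra hc
    push_neg at hc
    have hall : ∀ t, 0 ≤ t → t < z.1 → p.R ((t,(0:ℝ)):Bundle) z := by
      intro t h0 hlt
      exact rtot p hz (memZ h0 (le_refl _) zero_le_one) (hc t h0 hlt)
    have hmemseq : ∀ n : ℕ, ((z.1 - z.1/((n:ℝ)+1), (0:ℝ)) : Bundle) ∈
        {x : Bundle | x ∈ Z ∧ p.R x z} := by
      intro n
      have hpos : (0:ℝ) < z.1/((n:ℝ)+1) := div_pos h1 (by positivity)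
      have hle : z.1/((n:ℝ)+1) ≤ z.1 := by
        apply div_le_self h1.le
        linarith [Nat.cast_nonneg (α := ℝ) n]
      have h0 : (0:ℝ) ≤ z.1 - z.1/((n:ℝ)+1) := by linarith
      have hlt : z.1 - z.1/((n:ℝ)+1) < z.1 := by linarith
      exact ⟨memZ h0 (le_refl _) zero_le_one, hall _ h0 hlt⟩
    have hlim : Tendsto (fun n : ℕ => ((z.1 - z.1/((n:ℝ)+1), (0:ℝ)) : Bundle)) atTop
        (𝓝 ((z.1, (0:ℝ)) : Bundle)) := by
      have h0 : Tendsto (fun n : ℕ => z.1 * (1/((n:ℝ)+1))) atTop (𝓝 (z.1 * 0)) :=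
        tendsto_const_nhds.mul tendsto_one_div_add_atTop_nhds_zero_nat
      have h0' : Tendsto (fun n : ℕ => z.1/((n:ℝ)+1)) atTop (𝓝 0) := by
        rw [mul_zero] at h0
        convert h0 using 2 with n
        ring
      have h1' : Tendsto (fun n : ℕ => z.1 - z.1/((n:ℝ)+1)) atTop (𝓝 (z.1 - 0)) :=
        tendsto_const_nhds.sub h0'
      rw [sub_zero] at h1'
      exact h1'.prodMk_nhds tendsto_const_nhds
    have hmem : ((z.1, (0:ℝ)) : Bundle) ∈ {x : Bundle | x ∈ Z ∧ p.R x z} :=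
      (p.contUC z hz).mem_of_tendsto hlim (Filter.Eventually.of_forall hmemseq)
    have hnot : ¬ p.R ((z.1, (0:ℝ)):Bundle) ((z.1, z.2):Bundle) :=
      (p.qMono z.1 0 z.2 hz0 hzZ h2).2
    rw [Prod.mk.eta] at hnot
    exact hnot hmem.2
  obtain ⟨t, h0, hlt, hlow⟩ := hstep
  have htZ : ((t, (0:ℝ)) : Bundle) ∈ Z := memZ h0 (le_refl _) zero_le_one
  have ht2Z : ((t, z.2) : Bundle) ∈ Z := memZ h0 (Z2 hz) (Z3 hz)
  have hhigh : p.R ((t, z.2):Bundle) z := by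
    have h' : p.R ((t, z.2):Bundle) ((z.1, z.2):Bundle) := money_le p ht2Z hzZ hlt.le
    rw [Prod.mk.eta] at h'
    exact h'
  obtain ⟨s, hs, hI⟩ := ivt_vert p hz (Z2 hz) htZ ht2Z hlow hhigh
  have haZ : ((t, s) : Bundle) ∈ Z := memZ h0 hs.1 (le_trans hs.2 (Z3 hz))
  exact ⟨(t, s), haZ, hlt, indiff_snd_lt p haZ hz hI hlt, hI⟩

/-- Openness of the "p-curve lies strictly q-above" region. -/
lemma zplus_open (p q : CMPref) (hsc : SingleCrossing p q) {z : Bundle}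
    (hz : z ∈ Z) {a : Bundle} (ha : a ∈ Z) (ha1 : a.1 < z.1) (ha2 : a.2 < z.2)
    (hia : p.I a z) (hqa : ¬ q.R z a) :
    ∃ O : Set Bundle, IsOpen O ∧ z ∈ O ∧ ∀ z' ∈ O, z' ∈ Z →
      ∃ a' : Bundle, a' ∈ Z ∧ a'.1 < z'.1 ∧ a'.2 < z'.2 ∧ p.I a' z' ∧ ¬ q.R z' a' := by
  set t1 : ℝ := (a.1 + z.1)/2 with ht1def
  set T : ℝ := (t1 + z.1)/2 with hTdef
  have hat1 : a.1 < t1 := by simp only [ht1def]; linarith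
  have ht1T : t1 < T := by simp only [hTdef]; linarith
  have hTz : T < z.1 := by simp only [hTdef]; linarith
  have haT : a.1 ≤ T := le_of_lt (lt_trans hat1 ht1T)
  obtain ⟨f, hf, hmono, huniq⟩ := curve p hz ha hia ha1 hTz haT
  have ht1I : t1 ∈ Icc a.1 T := ⟨hat1.le, ht1T.le⟩
  have hTI : T ∈ Icc a.1 T := ⟨haT, le_refl _⟩
  obtain ⟨hw0Z, hw0I, hw0lb, hw0ub⟩ := hf t1 ht1I
  obtain ⟨hTZ, hTIz, hTlb, hTub⟩ := hf T hTI
  have hsc3 : f t1 < f T := hmono t1 T ht1I hTI ht1T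
  -- sign of the curve point w0 = (t1, f t1)
  have hq0 : ¬ q.R z ((t1, f t1) : Bundle) := by
    intro hcon
    by_cases h' : q.R ((t1, f t1):Bundle) z
    · exact two_point hsc hw0Z hz
        (fun h => absurd (congrArg Prod.fst h) (ne_of_lt (lt_trans ht1T hTz))) hw0I ⟨h', hcon⟩
    · exact sign_consistent p q hsc hz ha hw0Z hia hw0I ha1 (lt_trans ht1T hTz) hqa h'
  -- ball around w0 in the open set of strictly-q-better-than-z points
  have hopen : IsOpen {x : Bundle | x ∈ Z ∧ q.R z x}ᶜ := (q.contLC z hz).isOpen_compl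
  obtain ⟨ε, hε, hball⟩ := Metric.mem_nhds_iff.mp
    (hopen.mem_nhds (by simp only [Set.mem_compl_iff, Set.mem_setOf_eq, not_and]
                        exact fun _ => hq0))
  set δ : ℝ := min ε (T - t1) with hδdef
  have hδpos : 0 < δ := lt_min hε (by linarith)
  set T' : ℝ := t1 + δ/2 with hT'def
  have ht1T' : t1 < T' := by simp only [hT'def]; linarith
  have hT'T : T' < T := by
    have : δ ≤ T - t1 := min_le_right _ _
    simp only [hT'def]; linarith
  have hT'I : T' ∈ Icc a.1 T := ⟨le_of_lt (lt_trans hat1 ht1T'), hT'T.le⟩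
  have hT'z : T' < z.1 := lt_trans hT'T hTz
  obtain ⟨hc'Z, hc'I, hc'lb, hc'ub⟩ := hf T' hT'I
  have hsc4 : f t1 < f T' := hmono t1 T' ht1I hT'I ht1T'
  have hc'c3 : f T' ≤ f T := by
    rcases eq_or_lt_of_le hT'T.le with he | hl
    · rw [he]
    · exact (hmono T' T hT'I hTI hl).le
  -- v := (T', f t1)
  have hvZ : ((T', f t1) : Bundle) ∈ Z := memZ (Z1 hc'Z) (Z2 hw0Z) (Z3 hw0Z)
  have hvball : ((T', f t1) : Bundle) ∈ Metric.ball ((t1, f t1) : Bundle) ε := by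
    rw [Metric.mem_ball, Prod.dist_eq]
    have h1' : dist T' t1 < ε := by
      rw [Real.dist_eq, abs_of_pos (by linarith : (0:ℝ) < T' - t1)]
      have : δ ≤ ε := min_le_left _ _
      simp only [hT'def]
      linarith
    have h2' : dist (f t1) (f t1) < ε := by rw [dist_self]; exact hε
    exact max_lt h1' h2'
  have hqv : ¬ q.R z ((T', f t1) : Bundle) := by
    have := hball hvball
    simp only [Set.mem_compl_iff, Set.mem_setOf_eq, not_and] at this
    exact this hvZ
  have hvp : ¬ p.R ((T', f t1) : Bundle) z := by
    intro hcon
    have h' : p.R ((T', f t1):Bundle) ((T', f T'):Bundle) := p.trans _ z _ hcon hc'I.2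
    exact (p.qMono T' (f t1) (f T') hvZ hc'Z hsc4).2 h'
  -- w := (T', s_top)
  set sT : ℝ := (f T + z.2)/2 with hsTdef
  have hc3sT : f T < sT := by simp only [hsTdef]; linarith
  have hsTz : sT < z.2 := by simp only [hsTdef]; linarith
  have hwZ : ((T', sT) : Bundle) ∈ Z :=
    memZ (Z1 hc'Z) (le_trans (Z2 hTZ) (le_trans hc3sT.le (le_refl _)))
      (le_trans hsTz.le (Z3 hz))
  have hwp : ¬ p.R z ((T', sT) : Bundle) := by
    intro hcon
    have h' : p.R ((T', f T'):Bundle) ((T', sT):Bundle) := p.trans _ z _ hc'I.1 hcon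
    exact (p.qMono T' (f T') sT hc'Z hwZ (lt_of_le_of_lt hc'c3 hc3sT)).2 h'
  -- the open neighbourhood of z
  set O : Set Bundle :=
    {y : Bundle | T' < y.1} ∩ {y : Bundle | sT < y.2} ∩
    {x : Bundle | x ∈ Z ∧ p.R ((T', f t1):Bundle) x}ᶜ ∩
    {x : Bundle | x ∈ Z ∧ p.R x ((T', sT):Bundle)}ᶜ ∩
    {x : Bundle | x ∈ Z ∧ q.R x ((T', f t1):Bundle)}ᶜ with hOdef
  have hOopen : IsOpen O := by
    apply IsOpen.inter
    apply IsOpen.inter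
    apply IsOpen.inter
    apply IsOpen.inter
    · exact isOpen_lt continuous_const continuous_fst
    · exact isOpen_lt continuous_const continuous_snd
    · exact (p.contLC _ hvZ).isOpen_compl
    · exact (p.contUC _ hwZ).isOpen_compl
    · exact (q.contUC _ hvZ).isOpen_compl
  have hzO : z ∈ O := by
    refine ⟨⟨⟨⟨hT'z, hsTz⟩, ?_⟩, ?_⟩, ?_⟩
    · simp only [Set.mem_compl_iff, Set.mem_setOf_eq, not_and]
      exact fun _ => hvp
    · simp only [Set.mem_compl_iff, Set.mem_setOf_eq, not_and]
      exact fun _ => hwp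
    · simp only [Set.mem_compl_iff, Set.mem_setOf_eq, not_and]
      exact fun _ => hqv
  refine ⟨O, hOopen, hzO, ?_⟩
  intro z' hz'O hz'Z
  obtain ⟨⟨⟨⟨hO1, hO2⟩, hO3⟩, hO4⟩, hO5⟩ := hz'O
  simp only [Set.mem_compl_iff, Set.mem_setOf_eq, not_and, Set.mem_setOf_eq] at hO1 hO2 hO3 hO4 hO5
  have hv' : ¬ p.R ((T', f t1):Bundle) z' := hO3 hz'Z
  have hw' : ¬ p.R z' ((T', sT):Bundle) := hO4 hz'Z
  have hq' : ¬ q.R z' ((T', f t1):Bundle) := hO5 hz'Z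
  have hlow : p.R z' ((T', f t1):Bundle) := rtot p hvZ hz'Z hv'
  have hhigh : p.R ((T', sT):Bundle) z' := rtot p hz'Z hwZ hw'
  obtain ⟨s, hs, hI'⟩ := ivt_vert p hz'Z (le_of_lt (lt_of_lt_of_le hsc4 (le_trans hc'c3 hc3sT.le))) hvZ hwZ hlow hhigh
  have ha'Z : ((T', s) : Bundle) ∈ Z := memZ (Z1 hvZ) (le_trans (Z2 hvZ) hs.1) (le_trans hs.2 (Z3 hwZ))
  refine ⟨(T', s), ha'Z, hO1, lt_of_le_of_lt hs.2 hO2, hI', ?_⟩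
  intro hcon
  have h' : q.R ((T', s):Bundle) ((T', f t1):Bundle) := q_le q hvZ ha'Z hs.1
  exact hq' (q.trans z' _ _ hcon h')

/-- the "p-curve strictly q-above below z" predicate -/
def Pplus (p q : CMPref) (z : Bundle) : Prop :=
  z ∈ Z ∧ 0 < z.1 ∧ 0 < z.2 ∧
    ∃ a : Bundle, a ∈ Z ∧ a.1 < z.1 ∧ a.2 < z.2 ∧ p.I a z ∧ ¬ q.R z a

lemma wit_of_fail (p q : CMPref) (hsc : SingleCrossing p q) {z : Bundle} (hz : z ∈ Z)
    (hnc : ¬ CutsAt p q z) : Pplus p q z := by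
  rw [CutsAt, Set.not_subset] at hnc
  obtain ⟨x, hxmem, hxnot⟩ := hnc
  obtain ⟨⟨hxZ, hxb⟩, -, hqx⟩ := hxmem
  have hnpx : ¬ p.R x z := by
    intro hcon
    exact hxnot ⟨⟨hxZ, hxb⟩, hxZ, hcon⟩
  have hxne : x ≠ z := by
    intro h
    rw [h] at hnpx
    exact hnpx (rrefl p hz)
  have hxlt : x.1 < z.1 ∧ x.2 < z.2 := by
    rcases hxb with h | h
    · exact absurd h hxne
    · exact h
  have hxZ' : ((x.1, x.2) : Bundle) ∈ Z := by rw [Prod.mk.eta]; exact hxZ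
  have hx2Z : ((x.1, z.2) : Bundle) ∈ Z := memZ (Z1 hxZ) (Z2 hz) (Z3 hz)
  have hzZ : ((z.1, z.2) : Bundle) ∈ Z := by rw [Prod.mk.eta]; exact hz
  have hlow : p.R z ((x.1, x.2):Bundle) := by
    rw [Prod.mk.eta]; exact rtot p hxZ hz hnpx
  have hhigh : p.R ((x.1, z.2):Bundle) z := by
    have h' : p.R ((x.1, z.2):Bundle) ((z.1, z.2):Bundle) := money_le p hx2Z hzZ hxlt.1.le
    rw [Prod.mk.eta] at h'
    exact h'
  obtain ⟨s, hs, hI⟩ := ivt_vert p hz hxlt.2.le hxZ' hx2Z hlow hhigh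
  have haZ : ((x.1, s) : Bundle) ∈ Z := memZ (Z1 hxZ) (le_trans (Z2 hxZ) hs.1) (le_trans hs.2 (Z3 hz))
  have ha2 : s < z.2 := indiff_snd_lt p haZ hz hI hxlt.1
  have hqa : q.R ((x.1, s):Bundle) z := by
    have h' : q.R ((x.1, s):Bundle) ((x.1, x.2):Bundle) := q_le q hxZ' haZ hs.1
    rw [Prod.mk.eta] at h'
    exact q.trans _ x z h' hqx
  have hstrict : ¬ q.R z ((x.1, s):Bundle) := by
    intro hcon
    exact two_point hsc haZ hz
      (fun h => absurd (congrArg Prod.fst h) (ne_of_lt hxlt.1)) hI ⟨hqa, hcon⟩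
  exact ⟨hz, lt_of_le_of_lt (Z1 hxZ) hxlt.1, lt_of_le_of_lt (Z2 hxZ) hxlt.2,
    (x.1, s), haZ, hxlt.1, ha2, hI, hstrict⟩

lemma pplus_disjoint (p q : CMPref) (hsc : SingleCrossing p q) (hsc' : SingleCrossing q p)
    {z : Bundle} (h1 : Pplus p q z) (h2 : Pplus q p z) : False := by
  obtain ⟨hz, -, -, a, haZ, ha1, ha2, hia, hqa⟩ := h1
  obtain ⟨-, -, -, b, hbZ, hb1, hb2, hib, hpb⟩ := h2
  exact cross1 p q hsc hsc' hz haZ hbZ hia hib ha1 hb1 hqa hpb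

lemma pplus_cover (p q : CMPref) (hsc : SingleCrossing p q) (hsc' : SingleCrossing q p)
    {z : Bundle} (hz : z ∈ Z) (h1 : 0 < z.1) (h2 : 0 < z.2) :
    Pplus p q z ∨ Pplus q p z := by
  obtain ⟨a, haZ, ha1, ha2, hia⟩ := exists_wit p hz h1 h2
  have hane : a ≠ z := fun h => absurd (congrArg Prod.fst h) (ne_of_lt ha1)
  by_cases hqa : q.R z a
  · -- a is weakly q-worse: check strictness
    have hqa' : ¬ q.R a z := by
      intro hcon
      exact two_point hsc haZ hz hane hia ⟨hcon, hqa⟩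
    obtain ⟨b, hbZ, hb1, hb2, hib⟩ := exists_wit q hz h1 h2
    have hbne : b ≠ z := fun h => absurd (congrArg Prod.fst h) (ne_of_lt hb1)
    by_cases hpb : p.R z b
    · have hpb' : ¬ p.R b z := by
        intro hcon
        exact two_point hsc hbZ hz hbne ⟨hcon, hpb⟩ hib
      exact absurd (cross2 p q hsc hsc' hz haZ hbZ hia hib ha1 hb1 hqa' hpb') id
    · exact Or.inr ⟨hz, h1, h2, b, hbZ, hb1, hb2, hib, hpb⟩
  · exact Or.inl ⟨hz, h1, h2, a, haZ, ha1, ha2, hia, hqa⟩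

theorem prec_total {D : Set CMPref} (hD : RichSC D) {p q : CMPref}
    (hp : p ∈ D) (hq : q ∈ D) (hne : p ≠ q) : Prec p q ∨ Prec q p := by
  by_contra hcon
  push_neg at hcon
  obtain ⟨h1, h2⟩ := hcon
  have hsc : SingleCrossing p q := hD.1 p hp q hq hne
  have hsc' : SingleCrossing q p := hD.1 q hq p hp hne.symm
  have hfail : ∀ (p' q' : CMPref), p' ≠ q' → ¬ Prec p' q' → ∃ z ∈ Z, ¬ CutsAt p' q' z := by
    intro p' q' hne' hnp
    by_contra hc
    push_neg at hc
    exact hnp ⟨hne', hc⟩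
  obtain ⟨z1, hz1Z, hnc1⟩ := hfail p q hne h1
  obtain ⟨z2, hz2Z, hnc2⟩ := hfail q p hne.symm h2
  have hP1 : Pplus p q z1 := wit_of_fail p q hsc hz1Z hnc1
  have hP2 : Pplus q p z2 := wit_of_fail q p hsc' hz2Z hnc2
  -- neighbourhood selections
  have hOex : ∀ (p' q' : CMPref), SingleCrossing p' q' → ∀ z : Bundle,
      ∃ O : Set Bundle, IsOpen O ∧ (Pplus p' q' z → z ∈ O ∧
        ∀ z' ∈ O, z' ∈ Z → 0 < z'.1 → 0 < z'.2 → Pplus p' q' z') := by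
    intro p' q' hsc'' z
    by_cases hP : Pplus p' q' z
    · obtain ⟨hz, -, -, a, haZ, ha1, ha2, hia, hqa⟩ := hP
      obtain ⟨O, hO1, hO2, hO3⟩ := zplus_open p' q' hsc'' hz haZ ha1 ha2 hia hqa
      refine ⟨O, hO1, fun _ => ⟨hO2, ?_⟩⟩
      intro z' hz'O hz'Z hz'1 hz'2
      obtain ⟨a', h'⟩ := hO3 z' hz'O hz'Z
      exact ⟨hz'Z, hz'1, hz'2, a', h'⟩
    · exact ⟨∅, isOpen_empty, fun h => absurd h hP⟩
  choose! O1 hO1open hO1spec using hOex p q hsc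
  choose! O2 hO2open hO2spec using hOex q p hsc'
  set U : Set Bundle := ⋃ z ∈ {z : Bundle | Pplus p q z}, O1 z with hUdef
  set V : Set Bundle := ⋃ z ∈ {z : Bundle | Pplus q p z}, O2 z with hVdef
  have hUopen : IsOpen U := isOpen_biUnion (fun z _ => hO1open z)
  have hVopen : IsOpen V := isOpen_biUnion (fun z _ => hO2open z)
  set Zo : Set Bundle := (Ioi (0:ℝ)) ×ˢ (Ioc (0:ℝ) 1) with hZodef
  have hZoZ : ∀ z ∈ Zo, z ∈ Z := by
    rintro z ⟨hz1, hz2⟩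
    exact ⟨le_of_lt hz1, le_of_lt hz2.1, hz2.2⟩
  have hZomem : ∀ z : Bundle, z ∈ Z → 0 < z.1 → 0 < z.2 → z ∈ Zo := by
    intro z hz h1' h2'
    exact ⟨h1', h2', Z3 hz⟩
  have hpc : IsPreconnected Zo := ((convex_Ioi (0:ℝ)).prod (convex_Ioc (0:ℝ) 1)).isPreconnected
  have hcover : Zo ⊆ U ∪ V := by
    intro z hzZo
    have hz := hZoZ z hzZo
    rcases pplus_cover p q hsc hsc' hz hzZo.1 hzZo.2.1 with hP | hP
    · exact Or.inl (Set.mem_biUnion hP ((hO1spec z hP).1))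
    · exact Or.inr (Set.mem_biUnion hP ((hO2spec z hP).1))
  have hne1 : (Zo ∩ U).Nonempty :=
    ⟨z1, hZomem z1 hz1Z hP1.2.1 hP1.2.2.1, Set.mem_biUnion hP1 ((hO1spec z1 hP1).1)⟩
  have hne2 : (Zo ∩ V).Nonempty :=
    ⟨z2, hZomem z2 hz2Z hP2.2.1 hP2.2.2.1, Set.mem_biUnion hP2 ((hO2spec z2 hP2).1)⟩
  obtain ⟨w, hwZo, hwU, hwV⟩ := hpc U V hUopen hVopen hcover hne1 hne2
  have hwZ := hZoZ w hwZo
  obtain ⟨zu, hzuP, hwOu⟩ := Set.mem_iUnion₂.mp hwU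
  obtain ⟨zv, hzvP, hwOv⟩ := Set.mem_iUnion₂.mp hwV
  have hPu : Pplus p q w := (hO1spec zu hzuP).2 w hwOu hwZ hwZo.1 hwZo.2.1
  have hPv : Pplus q p w := (hO2spec zv hzvP).2 w hwOv hwZ hwZo.1 hwZo.2.1
  exact pplus_disjoint p q hsc hsc' hPu hPv

lemma preceq_trans {a b c : CMPref} (h1 : PrecEq a b) (h2 : PrecEq b c) : PrecEq a c := by
  rcases h1 with h1 | rfl
  · rcases h2 with h2 | rfl
    · by_cases hac : a = c
      · exact Or.inr hac
      · exact Or.inl ⟨hac, fun z hz x hx => h1.2 z hz (h2.2 z hz hx)⟩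
    · exact Or.inl h1
  · exact h2

/-- A weakly higher type weakly prefers the larger of an indifferent (for `r`) pair. -/
lemma lemUp (r p : CMPref) (h : PrecEq r p) {x y : Bundle} (hx : x ∈ Z) (hy : y ∈ Z)
    (hI : r.I x y) (hb : bleq x y) : p.R y x := by
  rcases hb with rfl | ⟨hlt1, hlt2⟩
  · exact rrefl p hy
  rcases h with hprec | rfl
  · by_contra hc
    have hxc : x ∈ {w : Bundle | w ∈ Z ∧ p.R y w}ᶜ := fun h' => hc h'.2
    obtain ⟨ε, hε, hball⟩ := Metric.mem_nhds_iff.mp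
      (((p.contLC y hy).isOpen_compl).mem_nhds hxc)
    set δ : ℝ := min (ε/2) ((y.1 - x.1)/2) with hδdef
    have hδpos : 0 < δ := lt_min (by linarith) (by linarith)
    have hxZ' : ((x.1, x.2) : Bundle) ∈ Z := by rw [Prod.mk.eta]; exact hx
    have hx'Z : ((x.1 + δ, x.2) : Bundle) ∈ Z := memZ (by linarith [Z1 hx]) (Z2 hx) (Z3 hx)
    have hx'ball : ((x.1 + δ, x.2) : Bundle) ∈ Metric.ball x ε := by
      rw [Metric.mem_ball, Prod.dist_eq]
      have h1' : dist (x.1 + δ) x.1 < ε := by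
        rw [Real.dist_eq, abs_of_pos (by linarith : (0:ℝ) < x.1 + δ - x.1)]
        have : δ ≤ ε/2 := min_le_left _ _
        linarith
      have h2' : dist x.2 x.2 < ε := by rw [dist_self]; exact hε
      exact max_lt h1' h2'
    have hnx' : ¬ p.R y ((x.1 + δ, x.2) : Bundle) := by
      have := hball hx'ball
      simp only [Set.mem_compl_iff, Set.mem_setOf_eq, not_and] at this
      exact this hx'Z
    have hx'y : p.R ((x.1 + δ, x.2) : Bundle) y := rtot p hy hx'Z hnx'
    have hx'sq : ((x.1 + δ, x.2) : Bundle) ∈ square y := by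
      refine ⟨hx'Z, Or.inr ⟨?_, hlt2⟩⟩
      have : δ ≤ (y.1 - x.1)/2 := min_le_right _ _
      simp only
      linarith
    have hrx'y : r.R ((x.1 + δ, x.2) : Bundle) y :=
      (hprec.2 y hy ⟨hx'sq, hx'Z, hx'y⟩).2.2
    have hrx'x : r.R ((x.1 + δ, x.2) : Bundle) x := r.trans _ y x hrx'y hI.2
    have hnot : ¬ r.R ((x.1 + δ, x.2) : Bundle) ((x.1, x.2) : Bundle) :=
      (r.moneyMono x.1 (x.1 + δ) x.2 hxZ' hx'Z (by linarith)).2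
    rw [Prod.mk.eta] at hnot
    exact hnot hrx'x
  · exact hI.2

/-- A weakly lower type weakly prefers the smaller of an indifferent (for `r`) pair. -/
lemma lemDown (p r : CMPref) (h : PrecEq p r) {x y : Bundle} (hx : x ∈ Z) (hy : y ∈ Z)
    (hI : r.I x y) (hb : bleq x y) : p.R x y := by
  rcases hb with rfl | ⟨hlt1, hlt2⟩
  · exact rrefl p hx
  rcases h with hprec | rfl
  · exact (hprec.2 y hy ⟨⟨hx, Or.inr ⟨hlt1, hlt2⟩⟩, hx, hI.1⟩).2.2
  · exact hI.1

/-- Monotonicity of a strategy-proof mechanism w.r.t. the cutting order. -/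
lemma lemB {D : Set CMPref} (hD : RichSC D) {S : Set CMPref} (hSD : ∀ p ∈ S, p ∈ D)
    (F : CMPref → Bundle) (hFZ : ∀ p ∈ S, F p ∈ Z) (hSP : StrategyProofOn S F)
    {p q : CMPref} (hp : p ∈ S) (hq : q ∈ S) (hprec : Prec p q) : bleq (F p) (F q) := by
  set x : Bundle := F p with hxdef
  set y : Bundle := F q with hydef
  have hx : x ∈ Z := hFZ p hp
  have hy : y ∈ Z := hFZ q hq
  have hxZ' : ((x.1, x.2) : Bundle) ∈ Z := by rw [Prod.mk.eta]; exact hx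
  have hyZ' : ((y.1, y.2) : Bundle) ∈ Z := by rw [Prod.mk.eta]; exact hy
  have hxy : p.R x y := hSP p hp q hq
  have hyx : q.R y x := hSP q hq p hp
  rcases lt_trichotomy x.2 y.2 with h | h | h
  · refine Or.inr ⟨?_, h⟩
    by_contra hc
    push_neg at hc
    have hmid : ((x.1, y.2) : Bundle) ∈ Z := memZ (Z1 hx) (Z2 hy) (Z3 hy)
    have h1 : p.R y ((x.1, y.2):Bundle) := by
      have h' : p.R ((y.1, y.2):Bundle) ((x.1, y.2):Bundle) := money_le p hyZ' hmid hc
      rw [Prod.mk.eta] at h'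
      exact h'
    have h2 : ¬ p.R x ((x.1, y.2):Bundle) := by
      have h' := (p.qMono x.1 x.2 y.2 hxZ' hmid h).2
      rw [Prod.mk.eta] at h'
      exact h'
    exact h2 (p.trans x y _ hxy h1)
  · left
    have hfst : x.1 = y.1 := by
      rcases lt_trichotomy x.1 y.1 with h' | h' | h'
      · exfalso
        have hxe : ((x.1, y.2) : Bundle) = x := by rw [← h, Prod.mk.eta]
        have hne := (q.moneyMono x.1 y.1 y.2 (by rw [hxe]; exact hx) hyZ' h').2
        rw [hxe, Prod.mk.eta] at hne
        exact hne hyx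
      · exact h'
      · exfalso
        have hye : ((y.1, x.2) : Bundle) = y := by rw [h, Prod.mk.eta]
        have hne := (p.moneyMono y.1 x.1 x.2 (by rw [hye]; exact hy) hxZ' h').2
        rw [hye, Prod.mk.eta] at hne
        exact hne hxy
    exact Prod.ext hfst h
  · exfalso
    have hylt : y.1 < x.1 := by
      by_contra hc
      push_neg at hc
      have hmid : ((y.1, x.2) : Bundle) ∈ Z := memZ (Z1 hy) (Z2 hx) (Z3 hx)
      have h1 : q.R x ((y.1, x.2):Bundle) := by
        have h' : q.R ((x.1, x.2):Bundle) ((y.1, x.2):Bundle) := money_le q hxZ' hmid hc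
        rw [Prod.mk.eta] at h'
        exact h'
      have h2 : ¬ q.R y ((y.1, x.2):Bundle) := by
        have h' := (q.qMono y.1 y.2 x.2 hyZ' hmid h).2
        rw [Prod.mk.eta] at h'
        exact h'
      exact h2 (q.trans y x _ hyx h1)
    have hble : bleq y x := Or.inr ⟨hylt, h⟩
    have hpyx : p.R y x := (hprec.2 x hx ⟨⟨hy, hble⟩, hy, hyx⟩).2.2
    have hIp : p.I y x := ⟨hpyx, hxy⟩
    have hqxy : q.R x y := lemUp p q (Or.inl hprec) hy hx hIp hble
    have hIq : q.I y x := ⟨hyx, hqxy⟩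
    have hne : y ≠ x := fun hh => absurd (congrArg Prod.fst hh) (ne_of_lt hylt)
    have hsc : SingleCrossing p q := hD.1 p (hSD p hp) q (hSD q hq) hprec.1
    exact two_point hsc hy hx hne hIp hIq

end SCAux

theorem stmt11 (D : Set CMPref) (hD : RichSC D) (Rlo Rhi : CMPref)
    (hloD : Rlo ∈ D) (hhiD : Rhi ∈ D)
    (F : CMPref → Bundle) (hFZ : ∀ p ∈ OrdInterval D Rlo Rhi, F p ∈ Z)
    (hSP : StrategyProofOn (OrdInterval D Rlo Rhi) F)
    (hIR : IROn (OrdInterval D Rlo Rhi) F)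
    (hF0 : F Rlo = ((0:ℝ), (0:ℝ)))
    (m : ℕ) (hm : 1 ≤ m) (Rk Rstar : ℕ → CMPref)
    (hmemk : ∀ k, 1 ≤ k → k ≤ m → Rk k ∈ OrdInterval D Rlo Rhi)
    (hmems : ∀ k, 1 ≤ k → k ≤ m + 1 → Rstar k ∈ OrdInterval D Rlo Rhi)
    (hchain : ∀ k, 1 ≤ k → k < m → Prec (Rk k) (Rk (k+1)))
    (hlo1 : Prec Rlo (Rk 1)) (hhi1 : Prec (Rk m) Rhi)
    (hint1 : PrecEq Rlo (Rstar 1))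
    (hint2 : ∀ k, 1 ≤ k → k ≤ m → PrecEq (Rstar k) (Rk k) ∧ PrecEq (Rk k) (Rstar (k+1)))
    (hint3 : PrecEq (Rstar (m+1)) Rhi)
    (hind1 : (Rstar 1).I ((0:ℝ), (0:ℝ)) (F (Rk 1)))
    (hind : ∀ k, 2 ≤ k → k ≤ m → (Rstar k).I (F (Rk (k-1))) (F (Rk k)))
    (hindl : (Rstar (m+1)).I (F (Rk m)) (F Rhi))
    (G : CMPref → Bundle)
    (hG1 : ∀ p ∈ OrdInterval D Rlo Rhi, Prec p (Rstar 1) → G p = ((0:ℝ), (0:ℝ)))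
    (hG2 : ∀ p ∈ OrdInterval D Rlo Rhi, ∀ k, 1 ≤ k → k ≤ m →
      PrecEq (Rstar k) p → Prec p (Rstar (k+1)) → G p = F (Rk k))
    (hG3 : ∀ p ∈ OrdInterval D Rlo Rhi, PrecEq (Rstar (m+1)) p → G p = F Rhi) :
    StrategyProofOn (OrdInterval D Rlo Rhi) G ∧ IROn (OrdInterval D Rlo Rhi) G := by
  classical
  have hRloI : Rlo ∈ OrdInterval D Rlo Rhi := by
    have hRk1m : PrecEq (Rk 1) (Rk m) := by
      have haux : ∀ j, 1 ≤ j → j ≤ m → PrecEq (Rk 1) (Rk j) := by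
        intro j h1 h2
        induction j with
        | zero => omega
        | succ n ih =>
          by_cases hn : n = 0
          · subst hn; exact Or.inr rfl
          · exact SCAux.preceq_trans (ih (by omega) (by omega))
              (Or.inl (hchain n (by omega) (by omega)))
      exact haux m hm le_rfl
    exact ⟨hloD, Or.inr rfl,
      SCAux.preceq_trans (Or.inl hlo1) (SCAux.preceq_trans hRk1m (Or.inl hhi1))⟩
  have hRhiI : Rhi ∈ OrdInterval D Rlo Rhi := ⟨hhiD, hRloI.2.2, Or.inr rfl⟩
  have hstar_chain : ∀ i j, 1 ≤ i → i ≤ j → j ≤ m+1 → PrecEq (Rstar i) (Rstar j) := by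
    intro i j h1 hij hj
    induction j with
    | zero => omega
    | succ n ih =>
      by_cases hin : i = n + 1
      · rw [hin]; exact Or.inr rfl
      · have h1n : 1 ≤ n := by omega
        exact SCAux.preceq_trans (ih (by omega) (by omega))
          (SCAux.preceq_trans (hint2 n h1n (by omega)).1 (hint2 n h1n (by omega)).2)
  set w : ℕ → Bundle := fun k => if k = 0 then ((0:ℝ),(0:ℝ)) else if k ≤ m then F (Rk k) else F Rhi
    with hwdef
  have hw0 : w 0 = ((0:ℝ),(0:ℝ)) := by simp [hwdef]
  have hwk : ∀ k, 1 ≤ k → k ≤ m → w k = F (Rk k) := by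
    intro k h1 h2
    simp only [hwdef]
    rw [if_neg (by omega), if_pos h2]
  have hwlast : w (m+1) = F Rhi := by
    simp only [hwdef]
    rw [if_neg (by omega), if_neg (by omega)]
  have hwZ : ∀ k, k ≤ m+1 → w k ∈ Z := by
    intro k hk
    by_cases h0 : k = 0
    · rw [h0, hw0]; exact SCAux.zeroZ
    by_cases h1 : k ≤ m
    · rw [hwk k (by omega) h1]; exact hFZ _ (hmemk k (by omega) h1)
    · have hkeq : k = m+1 := by omega
      rw [hkeq, hwlast]; exact hFZ _ hRhiI
  have hwind : ∀ n, n ≤ m → (Rstar (n+1)).I (w n) (w (n+1)) := by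
    intro n hn
    by_cases h0 : n = 0
    · subst h0
      rw [hw0, hwk 1 le_rfl hm]
      exact hind1
    by_cases h1 : n + 1 ≤ m
    · have := hind (n+1) (by omega) h1
      rw [Nat.add_sub_cancel] at this
      rw [hwk n (by omega) hn, hwk (n+1) (by omega) h1]
      exact this
    · have hneq : n = m := by omega
      subst hneq
      rw [hwk n (by omega) le_rfl, hwlast]
      exact hindl
  have hwble : ∀ n, n ≤ m → bleq (w n) (w (n+1)) := by
    intro n hn
    by_cases h0 : n = 0
    · subst h0
      rw [hw0, hwk 1 le_rfl hm, ← hF0]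
      exact SCAux.lemB hD (fun p hp => hp.1) F hFZ hSP hRloI (hmemk 1 le_rfl hm) hlo1
    by_cases h1 : n + 1 ≤ m
    · rw [hwk n (by omega) hn, hwk (n+1) (by omega) h1]
      exact SCAux.lemB hD (fun p hp => hp.1) F hFZ hSP (hmemk n (by omega) hn)
        (hmemk (n+1) (by omega) h1) (hchain n (by omega) (by omega))
    · have hneq : n = m := by omega
      subst hneq
      rw [hwk n (by omega) le_rfl, hwlast]
      exact SCAux.lemB hD (fun p hp => hp.1) F hFZ hSP (hmemk n (by omega) le_rfl) hRhiI hhi1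
  have hcmp : ∀ p ∈ OrdInterval D Rlo Rhi, ∀ i, 1 ≤ i → i ≤ m+1 →
      PrecEq (Rstar i) p ∨ Prec p (Rstar i) := by
    intro p hp i h1 h2
    by_cases h : PrecEq (Rstar i) p
    · exact Or.inl h
    · have hne : p ≠ Rstar i := by
        rintro rfl
        exact h (Or.inr rfl)
      rcases SCAux.prec_total hD hp.1 (hmems i h1 h2).1 hne with h' | h'
      · exact Or.inr h'
      · exact absurd (Or.inl h') h
  have hkey : ∀ p ∈ OrdInterval D Rlo Rhi, ∃ k, k ≤ m+1 ∧ G p = w k ∧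
      (∀ i, 1 ≤ i → i ≤ k → PrecEq (Rstar i) p) ∧
      (∀ i, k < i → i ≤ m+1 → Prec p (Rstar i)) := by
    intro p hp
    by_cases h1 : PrecEq (Rstar 1) p
    · set k := Nat.findGreatest (fun i => PrecEq (Rstar i) p) (m+1) with hkdef
      have hk1 : 1 ≤ k := Nat.le_findGreatest (by omega) h1
      have hkm : k ≤ m+1 := Nat.findGreatest_le _
      have hkP : PrecEq (Rstar k) p := Nat.findGreatest_spec (P := fun i => PrecEq (Rstar i) p) (m := 1) (n := m+1) (by omega) h1
      have hdown : ∀ i, 1 ≤ i → i ≤ k → PrecEq (Rstar i) p :=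
        fun i hi1 hik => SCAux.preceq_trans (hstar_chain i k hi1 hik hkm) hkP
      have hup : ∀ i, k < i → i ≤ m+1 → Prec p (Rstar i) := by
        intro i hki him
        have hnP : ¬ PrecEq (Rstar i) p := Nat.findGreatest_is_greatest hki him
        rcases hcmp p hp i (by omega) him with h' | h'
        · exact absurd h' hnP
        · exact h'
      by_cases hkm' : k ≤ m
      · refine ⟨k, by omega, ?_, hdown, hup⟩
        rw [hwk k hk1 hkm']
        exact hG2 p hp k hk1 hkm' hkP (hup (k+1) (Nat.lt_succ_self k) (Nat.succ_le_succ hkm'))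
      · have hkeq : k = m+1 := by omega
        refine ⟨k, by omega, ?_, hdown, hup⟩
        rw [hkeq, hwlast]
        exact hG3 p hp (by rw [← hkeq]; exact hkP)
    · have hall : ∀ i, 1 ≤ i → i ≤ m+1 → Prec p (Rstar i) := by
        intro i hi1 him
        rcases hcmp p hp i hi1 him with h' | h'
        · exact absurd (SCAux.preceq_trans (hstar_chain 1 i le_rfl hi1 him) h') h1
        · exact h'
      refine ⟨0, by omega, ?_, fun i hi1 hik => absurd (le_trans hi1 hik) (by omega), ?_⟩
      · rw [hw0]
        exact hG1 p hp (hall 1 le_rfl (by omega))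
      · intro i h0i him
        exact hall i (by omega) him
  have hpref : ∀ p ∈ OrdInterval D Rlo Rhi, ∀ k, k ≤ m+1 →
      (∀ i, 1 ≤ i → i ≤ k → PrecEq (Rstar i) p) →
      (∀ i, k < i → i ≤ m+1 → Prec p (Rstar i)) →
      ∀ j, j ≤ m+1 → p.R (w k) (w j) := by
    intro p hp k hk hdown hup j hj
    rcases le_or_gt j k with hjk | hkj
    · have aux : ∀ n, j ≤ n → n ≤ k → p.R (w n) (w j) := by
        intro n
        induction n with
        | zero =>
          intro hn1 _
          rw [Nat.le_zero.mp hn1]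
          exact SCAux.rrefl p (hwZ 0 (by omega))
        | succ n ih =>
          intro hn1 hn2
          by_cases hjn : j = n+1
          · rw [hjn]
            exact SCAux.rrefl p (hwZ (n+1) (by omega))
          · have step : p.R (w (n+1)) (w n) :=
              SCAux.lemUp (Rstar (n+1)) p (hdown (n+1) (by omega) hn2)
                (hwZ n (by omega)) (hwZ (n+1) (by omega))
                (hwind n (by omega)) (hwble n (by omega))
            exact p.trans _ _ _ step (ih (by omega) (by omega))
      exact aux k hjk le_rfl
    · have aux : ∀ n, k ≤ n → n ≤ m+1 → p.R (w k) (w n) := by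
        intro n
        induction n with
        | zero =>
          intro hn1 _
          rw [Nat.le_zero.mp hn1]
          exact SCAux.rrefl p (hwZ 0 (by omega))
        | succ n ih =>
          intro hn1 hn2
          by_cases hkn : k = n+1
          · rw [← hkn]
            exact SCAux.rrefl p (hwZ k (by omega))
          · have step : p.R (w n) (w (n+1)) :=
              SCAux.lemDown p (Rstar (n+1)) (Or.inl (hup (n+1) (by omega) hn2))
                (hwZ n (by omega)) (hwZ (n+1) (by omega))
                (hwind n (by omega)) (hwble n (by omega))
            exact p.trans _ _ _ (ih (by omega) (by omega)) step
      exact aux j hkj.le hj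
  constructor
  · intro p hp p' hp'
    obtain ⟨k, hk, hGp, hdown, hup⟩ := hkey p hp
    obtain ⟨k', hk', hGp', -, -⟩ := hkey p' hp'
    rw [hGp, hGp']
    exact hpref p hp k hk hdown hup k' hk'
  · intro p hp
    obtain ⟨k, hk, hGp, hdown, hup⟩ := hkey p hp
    rw [hGp, ← hw0]
    exact hpref p hp k hk hdown hup 0 (by omega)
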